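/- Let Λ be a qubit quantum channel (a completely positive trace-preserving linear map on 2×2 complex matrices), let ω = Λ(𝟙/2), and suppose the spectrum of ω is {λ, 1−λ} with λ ∈ [0, 1/2]. Then for every 2×2 Hermitian matrix Γ with Γ² = 𝟙 and Tr Γ = 0, we have −2√λ · 𝟙 ≤ Λ(Γ) ≤ 2√λ · 𝟙. -/

import Mathlib

open Matrix ComplexOrder

/-- A completely positive trace-preserving map, with complete positivity expressed via
positive semidefiniteness of the Choi matrix. -/
def IsCPTP {m n : Type*} [Fintype m] [DecidableEq m] [Fintype n] [DecidableEq n]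
    (Λ : Matrix m m ℂ →ₗ[ℂ] Matrix n n ℂ) : Prop :=
  (Matrix.PosSemidef (Matrix.of fun (p q : m × n) =>
      Λ (Matrix.single p.1 q.1 1) p.2 q.2)) ∧
  ∀ ρ : Matrix m m ℂ, (Λ ρ).trace = ρ.trace

set_option maxHeartbeats 1000000 in
set_option maxRecDepth 4000 in
/-- A map with positive semidefinite Choi matrix sends PSD matrices to PSD matrices. -/
lemma choi_map_psd {m n : Type*} [Fintype m] [DecidableEq m] [Fintype n] [DecidableEq n]
    (Λ : Matrix m m ℂ →ₗ[ℂ] Matrix n n ℂ)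
    (hC : (Matrix.PosSemidef (Matrix.of fun (p q : m × n) =>
      Λ (Matrix.single p.1 q.1 1) p.2 q.2)))
    {ρ : Matrix m m ℂ} (hρ : ρ.PosSemidef) : (Λ ρ).PosSemidef := by
  set C : Matrix (m × n) (m × n) ℂ := Matrix.of fun (p q : m × n) =>
      Λ (Matrix.single p.1 q.1 1) p.2 q.2 with hCdef
  obtain ⟨B, rfl⟩ : ∃ B : Matrix m m ℂ, ρ = Bᴴ * B := by
    open scoped MatrixOrder Matrix.Norms.L2Operator in
    exact CStarAlgebra.nonneg_iff_eq_star_mul_self.mp hρ.nonneg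
  set Y : m → Matrix (m × n) n ℂ := fun k => Matrix.of fun ip q' =>
    B k ip.1 * (if ip.2 = q' then (1:ℂ) else 0) with hY
  have key : Λ (Bᴴ * B) = ∑ k : m, (Y k)ᴴ * C * (Y k) := by
    conv_lhs => rw [matrix_eq_sum_single (Bᴴ * B)]
    ext p q
    have hsc : ∀ (i j : m), Λ (Matrix.single i j ((Bᴴ * B) i j)) p q
        = (Bᴴ * B) i j * Λ (Matrix.single i j 1) p q := by
      intro i j
      rw [show Matrix.single i j ((Bᴴ * B) i j)
          = ((Bᴴ * B) i j) • Matrix.single i j (1:ℂ) by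
        simp [Matrix.smul_single]]
      rw [_root_.map_smul]
      simp
    simp only [map_sum, Matrix.sum_apply]
    simp only [hsc]
    simp only [Matrix.mul_apply, Matrix.conjTranspose_apply,
      Fintype.sum_prod_type, hY, Matrix.of_apply, hCdef, star_mul', mul_ite, mul_one, mul_zero,
      ite_mul, zero_mul, apply_ite (star : ℂ → ℂ), star_one, star_zero, Finset.sum_ite_eq,
      Finset.sum_ite_eq', Finset.mem_univ, if_true, Finset.sum_mul, Finset.mul_sum]
    calc ∑ i : m, ∑ j : m, ∑ k : m, star (B k i) * B k j * Λ (Matrix.single i j 1) p q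
        = ∑ i : m, ∑ k : m, ∑ j : m, star (B k i) * B k j * Λ (Matrix.single i j 1) p q :=
          Finset.sum_congr rfl (fun i _ => Finset.sum_comm)
      _ = ∑ k : m, ∑ i : m, ∑ j : m, star (B k i) * B k j * Λ (Matrix.single i j 1) p q :=
          Finset.sum_comm
      _ = _ := by
          refine Finset.sum_congr rfl fun k _ => ?_
          rw [Finset.sum_comm]
          exact Finset.sum_congr rfl fun j _ => Finset.sum_congr rfl fun i _ => by ring
  rw [key]
  apply Finset.sum_induction _ _ (fun a b ha hb => ha.add hb) (PosSemidef.zero)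
  intro k _
  exact hC.conjTranspose_mul_mul_same _

/-- Scaling a PSD matrix by a nonnegative real preserves positive semidefiniteness. -/
lemma psd_smul_real {n : Type*} [Fintype n] {A : Matrix n n ℂ} (hA : A.PosSemidef)
    {r : ℝ} (hr : 0 ≤ r) : ((r : ℂ) • A).PosSemidef := by
  refine ⟨?_, fun x => ?_⟩
  · unfold Matrix.IsHermitian
    rw [Matrix.conjTranspose_smul, hA.1]
    simp
  · exact (hA.smul (Complex.zero_le_real.2 hr)).2 x

/-- The trace of a Hermitian matrix is the sum of its eigenvalues. -/
lemma trace_eq_sum_eigen {n : Type*} [Fintype n] [DecidableEq n] {A : Matrix n n ℂ}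
    (hA : A.IsHermitian) : A.trace = ∑ i, (hA.eigenvalues i : ℂ) := by
  conv_lhs => rw [hA.spectral_theorem]
  rw [Unitary.conjStarAlgAut_apply, Matrix.trace_mul_cycle, Unitary.coe_star_mul_self, one_mul, Matrix.trace_diagonal]
  simp

/-- The determinant of a PSD matrix is nonnegative. -/
lemma psd_det_nonneg {n : Type*} [Fintype n] [DecidableEq n] {A : Matrix n n ℂ}
    (hA : A.PosSemidef) : 0 ≤ A.det := by
  rw [hA.1.det_eq_prod_eigenvalues]
  exact Finset.prod_nonneg fun i _ => RCLike.ofReal_nonneg.2 (hA.eigenvalues_nonneg i)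

/-- A 2×2 Hermitian matrix with nonnegative trace and determinant is PSD. -/
lemma psd_of_trace_det {A : Matrix (Fin 2) (Fin 2) ℂ} (hA : A.IsHermitian)
    (ht : 0 ≤ A.trace) (hd : 0 ≤ A.det) : A.PosSemidef := by
  have htr := trace_eq_sum_eigen hA
  rw [Fin.sum_univ_two] at htr
  have hdet := hA.det_eq_prod_eigenvalues
  rw [Fin.prod_univ_two] at hdet
  have h1 : 0 ≤ hA.eigenvalues 0 + hA.eigenvalues 1 := by
    rw [htr] at ht
    norm_cast at ht
  have h2 : 0 ≤ hA.eigenvalues 0 * hA.eigenvalues 1 := by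
    rw [hdet] at hd
    norm_cast at hd
    exact Complex.zero_le_real.1 hd
  have k0 : 0 ≤ hA.eigenvalues 0 := by nlinarith
  have k1 : 0 ≤ hA.eigenvalues 1 := by nlinarith
  refine hA.posSemidef_iff_eigenvalues_nonneg.mpr fun i => ?_
  fin_cases i
  · exact k0
  · exact k1

/-- Polarization identity for 2×2 determinants. -/
lemma det_polar (A B : Matrix (Fin 2) (Fin 2) ℂ) :
    (A + B).det + (A - B).det = 2 * (A.det + B.det) := by
  simp [Matrix.det_fin_two]; ring

lemma det_smul_one_add (c : ℂ) (X : Matrix (Fin 2) (Fin 2) ℂ) :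
    (c • 1 + X).det = c ^ 2 + c * X.trace + X.det := by
  simp [Matrix.det_fin_two, Matrix.trace_fin_two, Matrix.one_apply]; ring

lemma rclike_coe (x : ℝ) : (RCLike.ofReal x : ℂ) = Complex.ofReal x := rfl

/-- If a qubit channel `Λ` maps the maximally mixed state to `ω` with spectrum `{λ, 1−λ}`
for `λ ∈ [0, 1/2]`, then for every Hermitian `Γ` with `Γ² = 𝟙`, `Tr Γ = 0` we have
`−2√λ·𝟙 ≤ Λ(Γ) ≤ 2√λ·𝟙`. -/
theorem spectrum_bound (Λ : Matrix (Fin 2) (Fin 2) ℂ →ₗ[ℂ] Matrix (Fin 2) (Fin 2) ℂ)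
    (hΛ : IsCPTP Λ) (lam : ℝ) (hlam : lam ∈ Set.Icc (0 : ℝ) (1/2))
    (hspec : spectrum ℂ (Λ ((1/2 : ℂ) • 1)) = {(lam : ℂ), ((1 - lam : ℝ) : ℂ)})
    (Γ : Matrix (Fin 2) (Fin 2) ℂ) (hherm : Γ.IsHermitian) (hsq : Γ * Γ = 1)
    (htr : Γ.trace = 0) :
    (((2 * Real.sqrt lam : ℝ) : ℂ) • 1 - Λ Γ).PosSemidef ∧
    (Λ Γ + ((2 * Real.sqrt lam : ℝ) : ℂ) • 1).PosSemidef := by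
  obtain ⟨hlam0, hlam2⟩ := hlam
  set ω := Λ ((1/2 : ℂ) • 1) with hω
  set X := Λ Γ with hX
  -- basic PSD facts
  have hhalf : ((1/2 : ℂ) • (1 : Matrix (Fin 2) (Fin 2) ℂ)).PosSemidef := by
    have : ((1/2 : ℂ) • (1 : Matrix (Fin 2) (Fin 2) ℂ))
        = (((1/2 : ℝ) : ℂ) • (1 : Matrix (Fin 2) (Fin 2) ℂ)) := by norm_num
    rw [this]
    exact psd_smul_real Matrix.PosSemidef.one (by norm_num)
  have hω_psd : ω.PosSemidef := choi_map_psd Λ hΛ.1 hhalf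
  -- (1 ± Γ) are PSD
  have hsum : ∀ s : ℂ, s = 1 ∨ s = -1 → ((1 : Matrix (Fin 2) (Fin 2) ℂ) + s • Γ).PosSemidef := by
    intro s hs
    have hss : s * s = 1 := by rcases hs with h | h <;> simp [h]
    have hstar : star s = s := by rcases hs with h | h <;> simp [h]
    have hmul : ((1 : Matrix (Fin 2) (Fin 2) ℂ) + s • Γ) * (1 + s • Γ)
        = (2 : ℂ) • (1 + s • Γ) := by
      have h' : ((1 : Matrix (Fin 2) (Fin 2) ℂ) + s • Γ) * (1 + s • Γ)
          = 1 + s • Γ + s • Γ + (s * s) • (Γ * Γ) := by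
        simp only [mul_add, add_mul, one_mul, mul_one, smul_mul_smul_comm]
        abel
      rw [h', hsq, hss, one_smul, smul_add, two_smul, two_smul]
      abel
    have hherm' : ((1 : Matrix (Fin 2) (Fin 2) ℂ) + s • Γ)ᴴ = 1 + s • Γ := by
      rw [Matrix.conjTranspose_add, Matrix.conjTranspose_smul, hherm, Matrix.conjTranspose_one,
        hstar]
    have : (1 : Matrix (Fin 2) (Fin 2) ℂ) + s • Γ
        = (((1/2 : ℝ) : ℂ)) • (((1 : Matrix (Fin 2) (Fin 2) ℂ) + s • Γ)ᴴ * (1 + s • Γ)) := by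
      rw [hherm', hmul, smul_smul]
      norm_num
    rw [this]
    exact psd_smul_real (Matrix.posSemidef_conjTranspose_mul_self _) (by norm_num)
  have hP : (Λ 1 + X).PosSemidef := by
    have := choi_map_psd Λ hΛ.1 (hsum 1 (Or.inl rfl))
    rwa [map_add, one_smul] at this
  have hQ : (Λ 1 - X).PosSemidef := by
    have := choi_map_psd Λ hΛ.1 (hsum (-1) (Or.inr rfl))
    rwa [map_add, _root_.map_smul, neg_one_smul, ← sub_eq_add_neg] at this
  -- Λ 1 = 2 • ω
  have hΛ1 : Λ 1 = (2 : ℂ) • ω := by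
    rw [hω, _root_.map_smul, smul_smul]
    norm_num
  -- trace facts
  have htrω : ω.trace = 1 := by
    rw [hω, hΛ.2]
    simp [Matrix.trace_smul, Matrix.trace_one]
  have htrX : X.trace = 0 := by rw [hX, hΛ.2, htr]
  -- X is Hermitian
  have hΛ1h : (Λ 1).IsHermitian := by
    rw [hΛ1]
    unfold Matrix.IsHermitian
    rw [Matrix.conjTranspose_smul, hω_psd.1]
    norm_num
  have hXh : X.IsHermitian := by
    have h : X = (Λ 1 + X) - Λ 1 := by abel
    rw [h]
    exact hP.1.sub hΛ1h
  -- eigenvalues of ω are lam or 1 - lam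
  have he : ∀ i, hω_psd.1.eigenvalues i = lam ∨ hω_psd.1.eigenvalues i = 1 - lam := by
    intro i
    have hmem : ((hω_psd.1.eigenvalues i : ℝ) : ℂ) ∈ spectrum ℂ ω := by
      have h1 := hω_psd.1.eigenvalues_mem_spectrum_real i
      have h2 := spectrum.algebraMap_mem ℂ h1
      simpa using h2
    rw [hspec] at hmem
    simp only [Set.mem_insert_iff, Set.mem_singleton_iff] at hmem
    rcases hmem with h | h
    · left; exact_mod_cast h
    · right; exact_mod_cast h
  have hsum1 : hω_psd.1.eigenvalues 0 + hω_psd.1.eigenvalues 1 = 1 := by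
    have h := trace_eq_sum_eigen hω_psd.1
    rw [htrω, Fin.sum_univ_two] at h
    exact_mod_cast h.symm
  have hdetω : ω.det = ((lam * (1 - lam) : ℝ) : ℂ) := by
    rw [hω_psd.1.det_eq_prod_eigenvalues, Fin.prod_univ_two]
    rcases he 0 with h0 | h0
    · have h1 : hω_psd.1.eigenvalues 1 = 1 - lam := by
        rw [h0] at hsum1; linarith
      rw [h0, h1]; simp only [rclike_coe]; push_cast; ring
    · have h1 : hω_psd.1.eigenvalues 1 = lam := by
        rw [h0] at hsum1; linarith
      rw [h0, h1]; simp only [rclike_coe]; push_cast; ring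
  -- determinant bound for X
  have hdet1 : (Λ 1).det = ((4 * (lam * (1 - lam)) : ℝ) : ℂ) := by
    rw [hΛ1, Matrix.det_smul, hdetω]
    simp only [Fintype.card_fin]
    rw [show ((2:ℂ)^2) = ((4:ℝ):ℂ) by norm_num, ← Complex.ofReal_mul]
  have hkey : 0 ≤ ((4 * lam : ℝ) : ℂ) + X.det := by
    have hsumdet : 0 ≤ (Λ 1 + X).det + (Λ 1 - X).det :=
      add_nonneg (psd_det_nonneg hP) (psd_det_nonneg hQ)
    rw [det_polar, hdet1] at hsumdet
    have h2 : 0 ≤ ((4 * (lam * (1 - lam)) : ℝ) : ℂ) + X.det := by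
      have hhalfc : (0:ℂ) ≤ (1/2:ℂ) := by
        rw [show (1/2:ℂ) = ((1/2:ℝ):ℂ) by norm_num]
        exact Complex.zero_le_real.2 (by norm_num)
      have h3 := mul_nonneg hhalfc hsumdet
      have h4 : (1/2 : ℂ) * (2 * (((4 * (lam * (1 - lam)) : ℝ) : ℂ) + X.det))
          = ((4 * (lam * (1 - lam)) : ℝ) : ℂ) + X.det := by ring
      rwa [h4] at h3
    have h3 : (0:ℂ) ≤ ((4 * lam^2 : ℝ) : ℂ) := Complex.zero_le_real.2 (by positivity)
    have heq : ((4*lam:ℝ):ℂ) + X.det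
        = ((4*lam^2:ℝ):ℂ) + (((4*(lam*(1-lam)):ℝ):ℂ) + X.det) := by push_cast; ring
    rw [heq]
    exact add_nonneg h3 h2
  -- the scalar
  set c : ℂ := ((2 * Real.sqrt lam : ℝ) : ℂ) with hc
  have hc2 : c^2 = ((4*lam : ℝ):ℂ) := by
    rw [hc, ← Complex.ofReal_pow]
    congr 1
    rw [mul_pow, Real.sq_sqrt hlam0]
    ring
  have hch : (c • (1 : Matrix (Fin 2) (Fin 2) ℂ)).IsHermitian := by
    unfold Matrix.IsHermitian
    rw [Matrix.conjTranspose_smul, Matrix.conjTranspose_one, hc]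
    simp [Complex.star_def, Complex.conj_ofReal]
  have htrc : (c • (1 : Matrix (Fin 2) (Fin 2) ℂ)).trace = c * 2 := by
    rw [Matrix.trace_smul, Matrix.trace_one]
    norm_num [smul_eq_mul]
  have hc2nn : (0:ℂ) ≤ c * 2 := by
    rw [hc, show (2:ℂ) = ((2:ℝ):ℂ) by norm_num, ← Complex.ofReal_mul]
    exact Complex.zero_le_real.2 (by positivity)
  constructor
  · apply psd_of_trace_det (hch.sub hXh)
    · rw [Matrix.trace_sub, htrc, htrX, sub_zero]
      exact hc2nn
    · rw [sub_eq_add_neg, det_smul_one_add, Matrix.trace_neg, htrX, neg_zero, mul_zero,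
        add_zero, Matrix.det_neg]
      simp only [Fintype.card_fin, neg_one_sq, one_mul]
      rw [hc2]
      exact hkey
  · apply psd_of_trace_det (hXh.add hch)
    · rw [Matrix.trace_add, htrc, htrX, zero_add]
      exact hc2nn
    · rw [add_comm, det_smul_one_add, htrX, mul_zero, add_zero, hc2]
      exact hkey
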